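/- Fix a scene s with |s| = t and set m = C(t,k), N = C(n,k). For every index i with 1 ≤ i ≤ N − m + 1, the number of complete sequences Q with τ(Q,s) = i equals m · (N − i)! · (N − m)!/(N − m − i + 1)! (that is, m · (N−i)! times the descending product (N−m)(N−m−1)⋯(N−m−i+2)); and for i > N − m + 1 this number is 0. Equivalently, the fraction of the N! complete sequences with τ(Q,s) = i equals (m/(N−i+1)) · ∏_{j=1}^{i−1} (1 − m/(N−j+1)). -/

import Mathlib

/-- The set of scenes: subsets of `Fin n` with at least `k` elements. -/
def scenes (n k : ℕ) : Finset (Finset (Fin n)) :=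
  Finset.univ.filter fun s => k ≤ s.card

/-- A complete sequence: a list of queries containing every `k`-element
subset of `Fin n` exactly once. -/
def CompleteSeq (n k : ℕ) (Q : List (Finset (Fin n))) : Prop :=
  Q.Nodup ∧ ∀ q : Finset (Fin n), q ∈ Q ↔ q.card = k

/-- `tau n Q s` is the least (1-based) index `i` such that `q_i ⊆ s`. -/
def tau (n : ℕ) (Q : List (Finset (Fin n))) (s : Finset (Fin n)) : ℕ :=
  Q.findIdx (fun q => decide (q ⊆ s)) + 1

/-- The expected time to discovery `T(Q) = (1/|S|) Σ_{s∈S} τ(Q,s)`. -/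
def T (n k : ℕ) (Q : List (Finset (Fin n))) : ℚ :=
  ((scenes n k).card : ℚ)⁻¹ * ∑ s ∈ scenes n k, (tau n Q s : ℚ)

/-- `D n k Q i`: the number of scenes discovered by the query at (1-based)
position `i` of `Q` but not by any earlier query. -/
def D (n k : ℕ) (Q : List (Finset (Fin n))) (i : ℕ) : ℕ :=
  ((scenes n k).filter fun s =>
    Q.getD (i - 1) ∅ ⊆ s ∧ ∀ j < i - 1, ¬ Q.getD j ∅ ⊆ s).card

/-- The list obtained from `Q` by swapping the queries at (1-based)
positions `i` and `i+1`. -/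
def swapAdj (n : ℕ) (Q : List (Finset (Fin n))) (i : ℕ) : List (Finset (Fin n)) :=
  (Q.set (i - 1) (Q.getD i ∅)).set i (Q.getD (i - 1) ∅)


section Helpers

open List Finset

variable {α : Type*} [DecidableEq α]


/-- Finset of all permutations (as lists) of a finset. -/
noncomputable def permsOf (U : Finset α) : Finset (List α) := U.toList.permutations.toFinset

lemma mem_permsOf {U : Finset α} {L : List α} :
    L ∈ permsOf U ↔ L.Nodup ∧ ∀ x, x ∈ L ↔ x ∈ U := by
  rw [permsOf, List.mem_toFinset, List.mem_permutations]
  constructor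
  · intro h
    refine ⟨h.nodup_iff.2 (U.nodup_toList), fun x => ?_⟩
    rw [h.mem_iff, Finset.mem_toList]
  · rintro ⟨h1, h2⟩
    apply List.perm_of_nodup_nodup_toFinset_eq h1 U.nodup_toList
    rw [Finset.toList_toFinset]
    ext x
    simp [List.mem_toFinset, h2 x]

lemma length_of_mem_permsOf {U : Finset α} {L : List α} (h : L ∈ permsOf U) :
    L.length = U.card := by
  rw [permsOf, List.mem_toFinset, List.mem_permutations] at h
  rw [h.length_eq, Finset.length_toList]

lemma cons_mem_permsOf {U : Finset α} {a : α} {L : List α} :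
    (a :: L) ∈ permsOf U ↔ a ∈ U ∧ L ∈ permsOf (U.erase a) := by
  simp only [mem_permsOf, List.nodup_cons, List.mem_cons, Finset.mem_erase]
  constructor
  · rintro ⟨⟨ha, hL⟩, hmem⟩
    refine ⟨(hmem a).1 (Or.inl rfl), hL, fun x => ?_⟩
    constructor
    · intro hx
      exact ⟨fun e => ha (e ▸ hx), (hmem x).1 (Or.inr hx)⟩
    · rintro ⟨hxa, hxU⟩
      rcases (hmem x).2 hxU with rfl | h
      · exact absurd rfl hxa
      · exact h
  · rintro ⟨haU, hL, hmem⟩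
    refine ⟨⟨fun haL => ((hmem a).1 haL).1 rfl, hL⟩, fun x => ?_⟩
    constructor
    · rintro (rfl | hx)
      · exact haU
      · exact ((hmem x).1 hx).2
    · intro hxU
      by_cases hxa : x = a
      · exact Or.inl hxa
      · exact Or.inr ((hmem x).2 ⟨hxa, hxU⟩)

lemma ne_nil_of_mem_permsOf {U : Finset α} (hU : U.Nonempty) {L : List α}
    (h : L ∈ permsOf U) : L ≠ [] := by
  obtain ⟨a, ha⟩ := hU
  intro hnil
  subst hnil
  exact absurd ((mem_permsOf.1 h).2 a |>.2 ha) List.not_mem_nil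


lemma card_permsOf_filter_take (U : Finset α) :
    ∀ (Bad : Finset α) (j : ℕ), Bad ⊆ U → j ≤ U.card →
      ((permsOf U).filter fun L => ∀ x ∈ L.take j, x ∈ Bad).card
        = Bad.card.descFactorial j * (U.card - j).factorial := by
  induction U using Finset.strongInduction with
  | _ U IH =>
  intro Bad j hBU hj
  rcases U.eq_empty_or_nonempty with rfl | hU
  · have hj0 : j = 0 := by simpa using hj
    subst hj0
    have h1 : permsOf (∅ : Finset α) = {([] : List α)} := by
      ext L
      simp only [mem_permsOf, Finset.mem_singleton, Finset.notMem_empty, iff_false]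
      constructor
      · rintro ⟨-, h⟩
        cases L with
        | nil => rfl
        | cons a M => exact absurd List.mem_cons_self (h a)
      · rintro rfl
        exact ⟨List.nodup_nil, by simp⟩
    simp [h1]
  · set H := if j = 0 then U else Bad with hH
    have hdecomp : ((permsOf U).filter fun L => ∀ x ∈ L.take j, x ∈ Bad)
        = H.biUnion fun b => ((permsOf (U.erase b)).filter
            fun L => ∀ x ∈ L.take (j-1), x ∈ Bad.erase b).image (b :: ·) := by
      ext L
      simp only [Finset.mem_biUnion, Finset.mem_image, Finset.mem_filter]
      constructor
      · rintro ⟨hL, hcond⟩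
        obtain ⟨a, M, rfl⟩ : ∃ a M, L = a :: M := by
          cases L with
          | nil => exact absurd rfl (ne_nil_of_mem_permsOf hU hL)
          | cons a M => exact ⟨a, M, rfl⟩
        obtain ⟨haU, hM⟩ := cons_mem_permsOf.1 hL
        have haM : a ∉ M := fun h => absurd (((mem_permsOf.1 hM).2 a).1 h) (by simp)
        rcases Nat.eq_zero_or_pos j with rfl | hj1
        · exact ⟨a, by simp [hH, haU], M, ⟨hM, by simp⟩, rfl⟩
        · have htake : (a :: M).take j = a :: M.take (j - 1) := by
            rw [List.take_cons hj1]
          rw [htake] at hcond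
          have haBad : a ∈ Bad := hcond a List.mem_cons_self
          refine ⟨a, by simp [hH, Nat.pos_iff_ne_zero.1 hj1, haBad], M, ⟨hM, ?_⟩, rfl⟩
          intro x hx
          refine Finset.mem_erase.2 ⟨?_, hcond x (List.mem_cons_of_mem _ hx)⟩
          rintro rfl
          exact haM (List.mem_of_mem_take hx)
      · rintro ⟨b, hb, M, ⟨hM, hcond⟩, rfl⟩
        have hbU : b ∈ U := by
          rcases eq_or_ne j 0 with rfl | hj0
          · simpa [hH] using hb
          · exact hBU (by simpa [hH, hj0] using hb)
        refine ⟨cons_mem_permsOf.2 ⟨hbU, hM⟩, ?_⟩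
        rcases Nat.eq_zero_or_pos j with rfl | hj1
        · simp
        · rw [List.take_cons hj1]
          intro x hx
          rcases List.mem_cons.1 hx with rfl | hx'
          · simpa [hH, Nat.pos_iff_ne_zero.1 hj1] using hb
          · exact Finset.erase_subset _ _ (hcond x hx')
    rw [hdecomp, Finset.card_biUnion]
    · have hcardim : ∀ b ∈ H, (((permsOf (U.erase b)).filter
            fun L => ∀ x ∈ L.take (j-1), x ∈ Bad.erase b).image (b :: ·)).card
          = (Bad.erase b).card.descFactorial (j-1) * (U.card - 1 - (j-1)).factorial := by
        intro b hb
        have hbU : b ∈ U := by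
          rcases eq_or_ne j 0 with rfl | hj0
          · simpa [hH] using hb
          · exact hBU (by simpa [hH, hj0] using hb)
        rw [Finset.card_image_of_injective _ (fun x y h => by injection h)]
        rw [IH (U.erase b) (Finset.erase_ssubset hbU) (Bad.erase b) (j - 1)
          (Finset.erase_subset_erase _ hBU) (by rw [Finset.card_erase_of_mem hbU]; omega)]
        rw [Finset.card_erase_of_mem hbU]
      rw [Finset.sum_congr rfl hcardim]
      rcases Nat.eq_zero_or_pos j with rfl | hj1
      · simp only [hH, reduceIte, Nat.zero_sub, Nat.descFactorial_zero, one_mul,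
          Nat.sub_zero]
        rw [Finset.sum_const, smul_eq_mul]
        obtain ⟨c, hc⟩ : ∃ c, #U = c + 1 := ⟨#U - 1, by
          have := Finset.card_pos.2 hU; omega⟩
        rw [hc]
        simp [Nat.factorial_succ]
      · have hj0 : j ≠ 0 := Nat.pos_iff_ne_zero.1 hj1
        obtain ⟨j', rfl⟩ : ∃ j', j = j' + 1 := ⟨j - 1, by omega⟩
        simp only [hH, if_neg hj0]
        rcases Bad.eq_empty_or_nonempty with rfl | hBad
        · simp
        · obtain ⟨c, hc⟩ : ∃ c, #Bad = c + 1 := ⟨#Bad - 1, by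
            have := Finset.card_pos.2 hBad; omega⟩
          have hsum : ∀ b ∈ Bad, (#(Bad.erase b)).descFactorial (j'+1-1) *
              (#U - 1 - (j'+1-1)).factorial
                = c.descFactorial j' * (#U - (j'+1)).factorial := by
            intro b hb
            rw [Finset.card_erase_of_mem hb, hc]
            congr 2
            omega
          rw [Finset.sum_congr rfl hsum, Finset.sum_const, smul_eq_mul, hc,
            Nat.succ_descFactorial_succ]
          ring
    · intro b hb b' hb' hne
      simp only [Finset.disjoint_left, Finset.mem_image]
      rintro L ⟨M, -, rfl⟩ ⟨M', -, hEq⟩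
      injection hEq with h1 _
      exact hne h1.symm


omit [DecidableEq α] in
lemma take_subset_iff_le_findIdx {L : List α} {p : α → Bool} {j : ℕ} (hj : j ≤ L.length) :
    (∀ x ∈ L.take j, p x = false) ↔ j ≤ L.findIdx p := by
  constructor
  · intro h
    by_contra hlt
    push_neg at hlt
    have hflt : L.findIdx p < L.length := lt_of_lt_of_le hlt hj
    have hx : L[L.findIdx p] ∈ L.take j := by
      rw [List.mem_iff_getElem?]
      exact ⟨L.findIdx p, by rw [List.getElem?_take_of_lt hlt,
        List.getElem?_eq_getElem hflt]⟩
    have hfalse := h _ hx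
    rw [List.findIdx_getElem (w := hflt)] at hfalse
    simp at hfalse
  · intro h x hx
    obtain ⟨m, hm, hget⟩ : ∃ m, m < j ∧ L[m]? = some x := by
      obtain ⟨m, hmlt, hgetel⟩ := List.mem_iff_getElem.1 hx
      have hmj : m < j := by rw [List.length_take] at hmlt; omega
      refine ⟨m, hmj, ?_⟩
      rw [← List.getElem?_take_of_lt hmj, List.getElem?_eq_getElem hmlt, hgetel]
    obtain ⟨hmL, rfl⟩ := List.getElem?_eq_some_iff.1 hget
    exact List.not_of_lt_findIdx (lt_of_lt_of_le hm h)


end Helpers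

open List Finset

theorem count_complete_seqs_with_tau (n k t : ℕ) (hk1 : 1 ≤ k) (hkt : k ≤ t) (htn : t ≤ n)
    (s : Finset (Fin n)) (hs : s.card = t) (i : ℕ) (hi1 : 1 ≤ i) :
    (i ≤ Nat.choose n k - Nat.choose t k + 1 →
      {Q : List (Finset (Fin n)) | CompleteSeq n k Q ∧ tau n Q s = i}.ncard
        = Nat.choose t k * Nat.factorial (Nat.choose n k - i) *
            ∏ j ∈ Finset.range (i - 1), (Nat.choose n k - Nat.choose t k - j)) ∧
    (Nat.choose n k - Nat.choose t k + 1 < i →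
      {Q : List (Finset (Fin n)) | CompleteSeq n k Q ∧ tau n Q s = i}.ncard = 0) ∧
    (i ≤ Nat.choose n k →
      ({Q : List (Finset (Fin n)) | CompleteSeq n k Q ∧ tau n Q s = i}.ncard : ℚ) /
          (Nat.factorial (Nat.choose n k) : ℚ)
        = ((Nat.choose t k : ℚ) / ((Nat.choose n k - i + 1 : ℕ) : ℚ)) *
            ∏ j ∈ Finset.Icc 1 (i - 1),
              (1 - (Nat.choose t k : ℚ) / ((Nat.choose n k - j + 1 : ℕ) : ℚ))) := by
  set N := Nat.choose n k with hN
  set m := Nat.choose t k with hm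
  set U : Finset (Finset (Fin n)) := Finset.powersetCard k Finset.univ with hU
  set Good : Finset (Finset (Fin n)) := Finset.powersetCard k s with hGood
  set Bad : Finset (Finset (Fin n)) := U \ Good with hBad
  set p : Finset (Fin n) → Bool := fun q => decide (q ⊆ s) with hp
  have hUcard : U.card = N := by
    rw [hU, Finset.card_powersetCard, Finset.card_univ, Fintype.card_fin]
  have hGoodcard : Good.card = m := by rw [hGood, Finset.card_powersetCard, hs]
  have hGU : Good ⊆ U := by
    intro q hq
    rw [hGood, Finset.mem_powersetCard] at hq
    rw [hU, Finset.mem_powersetCard]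
    exact ⟨Finset.subset_univ q, hq.2⟩
  have hBU : Bad ⊆ U := Finset.sdiff_subset
  have hBadcard : Bad.card = N - m := by
    rw [hBad, Finset.card_sdiff_of_subset hGU, hUcard, hGoodcard]
  have hm1 : 1 ≤ m := Nat.choose_pos hkt
  have hmN : m ≤ N := Nat.choose_le_choose k htn
  have hmemU : ∀ q : Finset (Fin n), q ∈ U ↔ q.card = k := by
    intro q
    rw [hU, Finset.mem_powersetCard]
    simp
  -- identify the set with a finset
  have hset : {Q : List (Finset (Fin n)) | CompleteSeq n k Q ∧ tau n Q s = i}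
      = ↑((permsOf U).filter fun L => L.findIdx p = i - 1) := by
    ext Q
    simp only [Set.mem_setOf_eq, Finset.coe_filter, CompleteSeq, tau, mem_permsOf,
      Set.mem_setOf_eq]
    constructor
    · rintro ⟨⟨h1, h2⟩, h3⟩
      have h3' : Q.findIdx p + 1 = i := h3
      exact ⟨⟨h1, fun q => (h2 q).trans (hmemU q).symm⟩, by omega⟩
    · rintro ⟨⟨h1, h2⟩, h3⟩
      have h3' : Q.findIdx p = i - 1 := h3
      refine ⟨⟨h1, fun q => (h2 q).trans (hmemU q)⟩, ?_⟩
      show Q.findIdx p + 1 = i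
      omega
  have hncard : {Q : List (Finset (Fin n)) | CompleteSeq n k Q ∧ tau n Q s = i}.ncard
      = ((permsOf U).filter fun L => L.findIdx p = i - 1).card := by
    rw [hset, Set.ncard_coe_finset]
  -- bad membership
  have hbad_iff : ∀ L ∈ permsOf U, ∀ x ∈ L, (x ∈ Bad ↔ p x = false) := by
    intro L hL x hx
    have hxU : x ∈ U := ((mem_permsOf.1 hL).2 x).1 hx
    rw [hBad, Finset.mem_sdiff, hGood, Finset.mem_powersetCard]
    have hxk : x.card = k := (hmemU x).1 hxU
    simp [hp, hxU, hxk]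
  -- counting of prefixes
  have hcount : ∀ j ≤ N, ((permsOf U).filter fun L => j ≤ L.findIdx p).card
      = (N - m).descFactorial j * (N - j).factorial := by
    intro j hjN
    have hfeq : ((permsOf U).filter fun L => ∀ x ∈ L.take j, x ∈ Bad)
        = ((permsOf U).filter fun L => j ≤ L.findIdx p) := by
      apply Finset.filter_congr
      intro L hL
      have hlen : L.length = N := by rw [length_of_mem_permsOf hL, hUcard]
      rw [← take_subset_iff_le_findIdx (by omega)]
      exact forall₂_congr fun x hx => hbad_iff L hL x (List.mem_of_mem_take hx)
    rw [← hfeq, ← hBadcard, ← hUcard]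
    convert card_permsOf_filter_take U Bad j hBU (by omega) using 2
    congr!
  -- the key identity
  have hkey : ∀ i' : ℕ, 1 ≤ i' → i' ≤ N →
      ((permsOf U).filter fun L => L.findIdx p = i' - 1).card
          + (N - m).descFactorial i' * (N - i').factorial
        = (N - m).descFactorial (i' - 1) * (N - (i' - 1)).factorial := by
    intro i' h1 h2
    have hsplit := Finset.card_filter_add_card_filter_not
      (s := (permsOf U).filter fun L => (i' - 1) ≤ L.findIdx p)
      (p := fun L => i' ≤ L.findIdx p)
    rw [Finset.filter_filter, Finset.filter_filter] at hsplit
    have e1 : ((permsOf U).filter fun L => (i' - 1) ≤ L.findIdx p ∧ i' ≤ L.findIdx p)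
        = (permsOf U).filter fun L => i' ≤ L.findIdx p :=
      Finset.filter_congr fun L _ => by omega
    have e2 : ((permsOf U).filter fun L => (i' - 1) ≤ L.findIdx p ∧ ¬ i' ≤ L.findIdx p)
        = (permsOf U).filter fun L => L.findIdx p = i' - 1 :=
      Finset.filter_congr fun L _ => by omega
    rw [e1, e2, hcount i' h2, hcount (i' - 1) (by omega)] at hsplit
    omega
  -- part 1
  have part1 : i ≤ N - m + 1 →
      {Q : List (Finset (Fin n)) | CompleteSeq n k Q ∧ tau n Q s = i}.ncard
        = m * (N - i).factorial * ∏ j ∈ Finset.range (i - 1), (N - m - j) := by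
    intro hile
    rw [hncard]
    obtain ⟨i', rfl⟩ : ∃ i', i = i' + 1 := ⟨i - 1, by omega⟩
    have h5 := hkey (i' + 1) (by omega) (by omega)
    simp only [Nat.add_sub_cancel] at h5 ⊢
    rw [Nat.descFactorial_succ] at h5
    have hNi : N - i' = (N - (i' + 1)) + 1 := by omega
    rw [hNi, Nat.factorial_succ] at h5
    set X := (N - m).descFactorial i' with hX
    set F := (N - (i' + 1)).factorial with hF
    have hc2 : N - (i' + 1) + 1 = m + (N - m - i') := by omega
    rw [hc2] at h5
    have h7 : X * ((m + (N - m - i')) * F) = m * (X * F) + (N - m - i') * X * F := by ring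
    have h8 := Nat.add_right_cancel (h5.trans h7)
    rw [h8, hX, Nat.descFactorial_eq_prod_range]
    ring
  -- part 2
  have part2 : N - m + 1 < i →
      {Q : List (Finset (Fin n)) | CompleteSeq n k Q ∧ tau n Q s = i}.ncard = 0 := by
    intro hgt
    rw [hncard]
    by_cases hiN : i ≤ N
    · have h5 := hkey i hi1 hiN
      rw [Nat.descFactorial_eq_zero_iff_lt.2 (show N - m < i - 1 by omega), zero_mul] at h5
      omega
    · rw [Finset.card_eq_zero, Finset.filter_eq_empty_iff]
      intro L hL
      obtain ⟨g, hg⟩ : Good.Nonempty := Finset.card_pos.1 (by omega)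
      have hgs : g ⊆ s := (Finset.mem_powersetCard.1 hg).1
      have hgL : g ∈ L := ((mem_permsOf.1 hL).2 g).2 (hGU hg)
      have hlt : L.findIdx p < L.length :=
        List.findIdx_lt_length.2 ⟨g, hgL, by simp [hp, hgs]⟩
      have hlen : L.length = N := by rw [length_of_mem_permsOf hL, hUcard]
      omega
  refine ⟨part1, part2, ?_⟩
  -- part 3
  intro hiN
  by_cases hile : i ≤ N - m + 1
  · rw [part1 hile]
    have hprod : ∏ j ∈ Finset.Icc 1 (i - 1), (1 - (m : ℚ) / ((N - j + 1 : ℕ) : ℚ))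
        = ∏ j ∈ Finset.Icc 1 (i - 1),
            (((N - m - j + 1 : ℕ) : ℚ) / ((N - j + 1 : ℕ) : ℚ)) := by
      refine Finset.prod_congr rfl fun j hj => ?_
      obtain ⟨hj1, hj2⟩ := Finset.mem_Icc.1 hj
      have hmle : m ≤ N - j + 1 := by omega
      have hden : ((N - j + 1 : ℕ) : ℚ) ≠ 0 := by
        exact_mod_cast (show N - j + 1 ≠ 0 by omega)
      rw [show (N - m - j + 1 : ℕ) = (N - j + 1) - m from by omega, Nat.cast_sub hmle,
        sub_div, div_self hden]
    rw [hprod, Finset.prod_div_distrib, ← Nat.cast_prod, ← Nat.cast_prod]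
    have hIcc : Finset.Icc 1 (i - 1) = Finset.Ico 1 i := by
      ext a
      simp only [Finset.mem_Icc, Finset.mem_Ico]
      omega
    have hnum : ∏ j ∈ Finset.Icc 1 (i - 1), (N - m - j + 1)
        = ∏ j ∈ Finset.range (i - 1), (N - m - j) := by
      rw [hIcc, Finset.prod_Ico_eq_prod_range]
      refine Finset.prod_congr rfl fun r hr => ?_
      have hr' := Finset.mem_range.1 hr
      omega
    have hden2 : ∏ j ∈ Finset.Icc 1 (i - 1), (N - j + 1) = N.descFactorial (i - 1) := by
      rw [hIcc, Finset.prod_Ico_eq_prod_range, Nat.descFactorial_eq_prod_range]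
      refine Finset.prod_congr rfl fun r hr => ?_
      have hr' := Finset.mem_range.1 hr
      omega
    rw [hnum, hden2, div_mul_div_comm]
    have hd1 : ((N.factorial : ℕ) : ℚ) ≠ 0 := by
      exact_mod_cast N.factorial_ne_zero
    have hd2 : ((N - i + 1 : ℕ) : ℚ) * ((N.descFactorial (i - 1) : ℕ) : ℚ) ≠ 0 := by
      have h1' : (N - i + 1 : ℕ) ≠ 0 := by omega
      have h2' : N.descFactorial (i - 1) ≠ 0 := by
        rw [Ne, Nat.descFactorial_eq_zero_iff_lt]
        omega
      exact mul_ne_zero (Nat.cast_ne_zero.2 h1') (Nat.cast_ne_zero.2 h2')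
    rw [div_eq_div_iff hd1 hd2]
    have hfac : (N - i + 1) * (N - i).factorial * N.descFactorial (i - 1) = N.factorial := by
      have h9 := Nat.factorial_mul_descFactorial (show i - 1 ≤ N from by omega)
      rw [show N - (i - 1) = (N - i) + 1 from by omega, Nat.factorial_succ] at h9
      exact h9
    have natid : (m * (N - i).factorial * ∏ j ∈ Finset.range (i - 1), (N - m - j)) *
        ((N - i + 1) * N.descFactorial (i - 1))
          = (m * ∏ j ∈ Finset.range (i - 1), (N - m - j)) * N.factorial := by
      calc (m * (N - i).factorial * ∏ j ∈ Finset.range (i - 1), (N - m - j)) *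
          ((N - i + 1) * N.descFactorial (i - 1))
          = (m * ∏ j ∈ Finset.range (i - 1), (N - m - j)) *
            ((N - i + 1) * (N - i).factorial * N.descFactorial (i - 1)) := by ring
        _ = (m * ∏ j ∈ Finset.range (i - 1), (N - m - j)) * N.factorial := by rw [hfac]
    exact_mod_cast natid
  · rw [part2 (by omega), Finset.prod_eq_zero (i := N - m + 1)
      (Finset.mem_Icc.2 ⟨by omega, by omega⟩)]
    · simp
    · rw [show N - (N - m + 1) + 1 = m from by omega]
      rw [div_self (by exact_mod_cast (show m ≠ 0 by omega))]
      ring
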